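/- arXiv:2207.04999 — 3 statements merged into one kernel-verified Lean document; each statement's English description precedes it below -/
import Mathlib

section
/- Let $(\lambda_n)_{n\in\mathbb{N}}$ be a strictly increasing sequence of positive reals with $\lambda_n \to \infty$, and let $(a_n)$ be real numbers with $\sum_{n=1}^\infty |a_n/\lambda_n| < \infty$. If there exists a sequence $(\ell_k)_{k\in\mathbb{N}}$ of natural numbers with $\ell_k \to \infty$ such that $\sum_{n=1}^\infty a_n/\lambda_n^{\ell_k} = 0$ for all $k$, then $a_n = 0$ for all $n$. -/
theorem stmt_0 (lam a : ℕ → ℝ) (hpos : ∀ n, 0 < lam n) (hmono : StrictMono lam)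
    (htend : Filter.Tendsto lam Filter.atTop Filter.atTop)
    (hsum : Summable (fun n => |a n / lam n|))
    (ell : ℕ → ℕ) (hell : Filter.Tendsto ell Filter.atTop Filter.atTop)
    (hzero : ∀ k, ∑' n, a n / (lam n) ^ (ell k) = 0) :
    ∀ n, a n = 0 := by
  by_contra hcon
  push_neg at hcon
  set m := Nat.find hcon with hmdef
  have hm : a m ≠ 0 := Nat.find_spec hcon
  have hbelow : ∀ i < m, a i = 0 := fun i hi => not_not.mp (Nat.find_min hcon hi)
  -- summability for each exponent ≥ 1
  have hsumL : ∀ L : ℕ, 1 ≤ L → Summable (fun n => a n / lam n ^ L) := by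
    intro L hL
    apply Summable.of_norm_bounded_eventually_nat hsum
    filter_upwards [Filter.tendsto_atTop.mp htend 1] with n h1
    have hp := hpos n
    rw [Real.norm_eq_abs, abs_div, abs_div, abs_of_pos hp, abs_of_pos (pow_pos hp L)]
    apply div_le_div_of_nonneg_left (abs_nonneg _) hp
    calc lam n = lam n ^ 1 := (pow_one _).symm
      _ ≤ lam n ^ L := pow_le_pow_right₀ h1 hL
  set C := ∑' n, |a n / lam n| with hC
  have hC0 : 0 ≤ C := tsum_nonneg fun n => abs_nonneg _
  set r := lam m / lam (m + 1) with hr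
  have hr0 : 0 ≤ r := le_of_lt (div_pos (hpos m) (hpos (m + 1)))
  have hr1 : r < 1 := (div_lt_one (hpos (m + 1))).mpr (hmono (Nat.lt_succ_self m))
  -- key estimate
  have key : ∀ L : ℕ, 1 ≤ L → (∑' n, a n / lam n ^ L = 0) →
      |a m| ≤ lam m * C * r ^ (L - 1) := by
    intro L hL h0
    have hLe : L - 1 + 1 = L := by omega
    set f : ℕ → ℝ := fun n => a n / lam n ^ L with hf
    have hSf : Summable f := hsumL L hL
    have hsplit : (∑ i ∈ Finset.range m, f i) + ∑' n, f (n + m) = ∑' n, f n :=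
      Summable.sum_add_tsum_nat_add m hSf
    have hzerolow : ∑ i ∈ Finset.range m, f i = 0 := by
      apply Finset.sum_eq_zero
      intro i hi
      simp [hf, hbelow i (Finset.mem_range.mp hi)]
    have htail0 : ∑' n, f (n + m) = 0 := by
      rw [hzerolow, zero_add, h0] at hsplit; exact hsplit
    have hSsh : Summable (fun n => f (n + m)) := (summable_nat_add_iff m).mpr hSf
    have hsplit2 := Summable.tsum_eq_zero_add hSsh
    rw [htail0] at hsplit2
    have hfm : f m = - ∑' n, f (n + 1 + m) := by
      have : f (0 + m) = f m := by norm_num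
      rw [this] at hsplit2
      linarith [hsplit2]
    -- summability of the shifted abs sequences
    have hSabs : Summable (fun n => |a (n + 1 + m) / lam (n + 1 + m)|) := by
      refine ((summable_nat_add_iff (1 + m)).mpr hsum).congr fun n => ?_
      rw [show n + (1 + m) = n + 1 + m by omega]
    have hSfabs : Summable (fun n => |f (n + 1 + m)|) := by
      refine ((summable_nat_add_iff (1 + m)).mpr hSf.abs).congr fun n => ?_
      rw [show n + (1 + m) = n + 1 + m by omega]
    -- bound the tail
    have hb : ∀ n, |f (n + 1 + m)| ≤ |a (n + 1 + m) / lam (n + 1 + m)| / lam (m + 1) ^ (L - 1) := by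
      intro n
      have hp := hpos (n + 1 + m)
      have hle : lam (m + 1) ≤ lam (n + 1 + m) := hmono.monotone (by omega)
      have hp1 := hpos (m + 1)
      rw [hf]
      simp only [abs_div, abs_of_pos hp, abs_of_pos (pow_pos hp L)]
      rw [div_div]
      apply div_le_div_of_nonneg_left (abs_nonneg _)
        (mul_pos hp (pow_pos hp1 (L - 1)))
      calc lam (n + 1 + m) * lam (m + 1) ^ (L - 1)
          ≤ lam (n + 1 + m) * lam (n + 1 + m) ^ (L - 1) := by
            apply mul_le_mul_of_nonneg_left (pow_le_pow_left₀ hp1.le hle _) hp.le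
        _ = lam (n + 1 + m) ^ L := by rw [← pow_succ', hLe]
    have htailabs : (∑' n, |a (n + 1 + m) / lam (n + 1 + m)|) ≤ C := by
      have h2 : (∑ i ∈ Finset.range (1 + m), |a i / lam i|) +
          ∑' n, |a (n + (1 + m)) / lam (n + (1 + m))| = C := Summable.sum_add_tsum_nat_add (1 + m) hsum
      have h3 : (∑' n, |a (n + (1 + m)) / lam (n + (1 + m))|) =
          ∑' n, |a (n + 1 + m) / lam (n + 1 + m)| := by
        apply tsum_congr; intro n; rw [show n + (1 + m) = n + 1 + m by omega]
      have h4 : 0 ≤ ∑ i ∈ Finset.range (1 + m), |a i / lam i| :=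
        Finset.sum_nonneg fun i _ => abs_nonneg _
      linarith [h2, h3.symm ▸ h2]
    have htailbd : |∑' n, f (n + 1 + m)| ≤ C / lam (m + 1) ^ (L - 1) := by
      calc |∑' n, f (n + 1 + m)| ≤ ∑' n, |f (n + 1 + m)| := by
            have := norm_tsum_le_tsum_norm (f := fun n => f (n + 1 + m)) (by simpa using hSfabs)
            simpa using this
        _ ≤ ∑' n, |a (n + 1 + m) / lam (n + 1 + m)| / lam (m + 1) ^ (L - 1) :=
            Summable.tsum_le_tsum hb hSfabs (hSabs.div_const _)
        _ = (∑' n, |a (n + 1 + m) / lam (n + 1 + m)|) / lam (m + 1) ^ (L - 1) :=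
            tsum_div_const
        _ ≤ C / lam (m + 1) ^ (L - 1) := by
            exact (div_le_div_iff_of_pos_right (pow_pos (hpos (m + 1)) _)).mpr htailabs
    have h1 : |a m| / lam m ^ L ≤ C / lam (m + 1) ^ (L - 1) := by
      have h5 : |f m| ≤ C / lam (m + 1) ^ (L - 1) := by rw [hfm, abs_neg]; exact htailbd
      rw [hf] at h5
      simpa [abs_div, abs_of_pos (pow_pos (hpos m) L)] using h5
    have h6 : |a m| ≤ C / lam (m + 1) ^ (L - 1) * lam m ^ L :=
      (div_le_iff₀ (pow_pos (hpos m) L)).mp h1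
    calc |a m| ≤ C / lam (m + 1) ^ (L - 1) * lam m ^ L := h6
      _ = lam m * C * r ^ (L - 1) := by
          rw [hr, div_pow, ← hLe, pow_succ]
          have := (hpos (m + 1)).ne'
          field_simp
          ring_nf
          rw [show 1 + (L - 1) - 1 = L - 1 by omega]
  -- take the limit
  have h1 : Filter.Tendsto (fun k => ell k - 1) Filter.atTop Filter.atTop := by
    apply Filter.tendsto_atTop.mpr; intro b
    filter_upwards [Filter.tendsto_atTop.mp hell (b + 1)] with k hk
    omega
  have h2 : Filter.Tendsto (fun k => lam m * C * r ^ (ell k - 1)) Filter.atTop (nhds 0) := by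
    have := ((tendsto_pow_atTop_nhds_zero_of_lt_one hr0 hr1).comp h1).const_mul (lam m * C)
    simpa using this
  have hev : ∀ᶠ k in Filter.atTop, |a m| ≤ lam m * C * r ^ (ell k - 1) := by
    filter_upwards [Filter.tendsto_atTop.mp hell 1] with k hk
    exact key (ell k) hk (hzero k)
  have hle0 : |a m| ≤ 0 := ge_of_tendsto h2 hev
  exact hm (abs_eq_zero.mp (le_antisymm hle0 (abs_nonneg _)))
end

section
/- Let $v : (0,\infty) \to \mathbb{R}$, and suppose there exist constants $a \in \mathbb{R}$, $\beta \in (0,1)$, $t_0 > 0$, and an integrable function $\mu$ on $(0,t_0)$ such that $v(t) = a + \frac{1}{\Gamma(\beta)}\int_0^{t_0}(t-s)^{\beta-1}\mu(s)\,ds$ for all $t > t_0$. If for every $p \in \mathbb{N}$ there exists $C(p) > 0$ with $|v(t)| \le C(p)/t^{p}$ as $t \to \infty$, then $a = 0$ and $\mu = 0$ almost everywhere on $(0,t_0)$. -/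
open MeasureTheory Filter Finset

noncomputable def binc : ℕ → ℝ → ℝ
  | 0, _ => 1
  | (k+1), γ => (-γ / (k+1)) * binc k (γ-1)

lemma binc_pos : ∀ (k : ℕ) (γ : ℝ), γ < 0 → 0 < binc k γ := by
  intro k
  induction k with
  | zero => intro γ _; simp [binc]
  | succ k ih =>
    intro γ hγ
    have h1 : (0:ℝ) < -γ / (k+1) := div_pos (by linarith) (by positivity)
    exact mul_pos h1 (ih (γ-1) (by linarith))

lemma binc_rec (i : ℕ) (δ : ℝ) : ((i:ℝ)+1) * binc (i+1) δ = -δ * binc i (δ-1) := by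
  have h : ((i:ℝ)+1) ≠ 0 := by positivity
  rw [binc]
  field_simp

lemma taylor_bound : ∀ (m : ℕ) (γ : ℝ), γ < 0 →
    ∃ C, 0 ≤ C ∧ ∀ x ∈ Set.Icc (0:ℝ) (1/2),
      |(1-x)^γ - ∑ k ∈ Finset.range m, binc k γ * x^k| ≤ C * x^m := by
  intro m
  induction m with
  | zero =>
    intro γ hγ
    refine ⟨(1/2:ℝ)^γ, Real.rpow_nonneg (by norm_num) γ, fun x hx => ?_⟩
    simp only [Finset.range_zero, Finset.sum_empty, sub_zero, pow_zero, mul_one]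
    rw [abs_of_nonneg (Real.rpow_nonneg (by linarith [hx.2]) γ)]
    exact Real.rpow_le_rpow_of_nonpos (by norm_num) (by linarith [hx.1, hx.2]) hγ.le
  | succ m ih =>
    intro γ hγ
    obtain ⟨C, hC0, hC⟩ := ih (γ-1) (by linarith)
    refine ⟨|γ| * C, by positivity, fun x hx => ?_⟩
    obtain ⟨hx0, hx2⟩ := hx
    set f : ℝ → ℝ := fun u => (1-u)^γ - ∑ k ∈ Finset.range (m+1), binc k γ * u^k with hf
    set f' : ℝ → ℝ := fun u =>
      -γ * ((1-u)^(γ-1) - ∑ k ∈ Finset.range m, binc k (γ-1) * u^k) with hf'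
    have hderiv : ∀ u ∈ Set.Icc 0 x, HasDerivAt f (f' u) u := by
      intro u hu
      have h1u : (0:ℝ) < 1 - u := by
        have := hu.2; linarith
      have hr : HasDerivAt (fun u : ℝ => (1-u)^γ) (γ * (1-u)^(γ-1) * (-1)) u := by
        have h := HasDerivAt.rpow_const (p := γ) ((hasDerivAt_id u).const_sub 1) (Or.inl h1u.ne')
        simp only [id_eq] at h
        convert h using 1
        ring
      have hs : HasDerivAt (fun u : ℝ => ∑ k ∈ Finset.range (m+1), binc k γ * u^k)
          (∑ k ∈ Finset.range (m+1), binc k γ * ((k:ℝ) * u^(k-1))) u :=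
        HasDerivAt.fun_sum fun k _ => (hasDerivAt_pow k u).const_mul (binc k γ)
      have key : γ * (1-u)^(γ-1) * (-1)
          - ∑ k ∈ Finset.range (m+1), binc k γ * ((k:ℝ) * u^(k-1)) = f' u := by
        have hsum_eq : (∑ k ∈ Finset.range (m+1), binc k γ * ((k:ℝ) * u^(k-1)))
            = ∑ i ∈ Finset.range m, (-γ * binc i (γ-1)) * u^i := by
          rw [Finset.sum_range_succ']
          simp only [Nat.cast_zero, zero_mul, mul_zero, add_zero]
          refine Finset.sum_congr rfl fun i _ => ?_
          have : binc (i+1) γ * (((i:ℝ)+1) * u^i) = (((i:ℝ)+1) * binc (i+1) γ) * u^i := by ring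
          push_cast
          rw [this, binc_rec i γ]
        rw [hsum_eq, hf']
        simp only [mul_sub, Finset.mul_sum, ← mul_assoc]
        ring
      rw [← key]
      exact hr.sub hs
    have hbound : ∀ u ∈ Set.Icc 0 x, ‖f' u‖ ≤ |γ| * C * x^m := by
      intro u hu
      have hu2 : u ∈ Set.Icc (0:ℝ) (1/2) := ⟨hu.1, le_trans hu.2 hx2⟩
      have h1 := hC u hu2
      rw [hf']
      rw [Real.norm_eq_abs, abs_mul, abs_neg]
      calc |γ| * |(1-u)^(γ-1) - ∑ k ∈ Finset.range m, binc k (γ-1) * u^k|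
          ≤ |γ| * (C * u^m) := by gcongr
        _ ≤ |γ| * (C * x^m) := by
            have := pow_le_pow_left₀ hu.1 hu.2 m
            gcongr
        _ = |γ| * C * x^m := by ring
    have hmvt := Convex.norm_image_sub_le_of_norm_hasDerivWithin_le
      (fun u hu => (hderiv u hu).hasDerivWithinAt) hbound (convex_Icc 0 x)
      (Set.left_mem_Icc.2 hx0) (Set.right_mem_Icc.2 hx0)
    have hf0 : f 0 = 0 := by
      rw [hf]
      simp [Finset.sum_range_succ', binc]
    rw [hf0, sub_zero, Real.norm_eq_abs, Real.norm_eq_abs, sub_zero, abs_of_nonneg hx0] at hmvt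
    calc |f x| ≤ |γ| * C * x^m * x := hmvt
      _ = |γ| * C * x^(m+1) := by ring

theorem stmt_9 (v : ℝ → ℝ) (a t₀ β : ℝ) (ht₀ : 0 < t₀)
    (hβ : β ∈ Set.Ioo (0:ℝ) 1) (μ : ℝ → ℝ) (hint : IntegrableOn μ (Set.Ioc 0 t₀))
    (hrep : ∀ t, t₀ < t →
      v t = a + (1 / Real.Gamma β) * ∫ s in Set.Ioc 0 t₀, (t - s) ^ (β - 1) * μ s)
    (hdecay : ∀ p : ℕ, 0 < p → ∃ C > 0, ∃ T, ∀ t, T ≤ t → |v t| ≤ C / t ^ (p : ℝ)) :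
    a = 0 ∧ ∀ᵐ s ∂(volume.restrict (Set.Ioc 0 t₀)), μ s = 0 := by
  obtain ⟨hβ0, hβ1⟩ := hβ
  have hγ0 : β - 1 < 0 := by linarith
  have hΓ : 0 < Real.Gamma β := Real.Gamma_pos_of_pos hβ0
  set B := ∫ s in Set.Ioc 0 t₀, |μ s| with hB
  have hB0 : 0 ≤ B := integral_nonneg (fun s => abs_nonneg _)
  have hmes : MeasurableSet (Set.Ioc (0:ℝ) t₀) := measurableSet_Ioc
  -- integrability of bounded-continuous multiples of μ
  have intmul : ∀ g : ℝ → ℝ, ContinuousOn g (Set.Icc 0 t₀) →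
      IntegrableOn (fun s => g s * μ s) (Set.Ioc 0 t₀) := by
    intro g hg
    obtain ⟨K, hK⟩ := (isCompact_Icc).exists_bound_of_continuousOn hg
    exact Integrable.bdd_mul hint
      ((hg.mono Set.Ioc_subset_Icc_self).aestronglyMeasurable hmes)
      ((ae_restrict_iff' hmes).2 (Filter.Eventually.of_forall
        (fun s hs => hK s (Set.Ioc_subset_Icc_self hs))))
  -- bound for integrals of bounded multiples of μ
  have intbnd : ∀ (g : ℝ → ℝ) (K : ℝ), IntegrableOn (fun s => g s * μ s) (Set.Ioc 0 t₀) →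
      (∀ s ∈ Set.Ioc 0 t₀, |g s| ≤ K) →
      |∫ s in Set.Ioc 0 t₀, g s * μ s| ≤ K * B := by
    intro g K hgint hK
    calc |∫ s in Set.Ioc 0 t₀, g s * μ s| ≤ ∫ s in Set.Ioc 0 t₀, |g s * μ s| := by
          have := norm_integral_le_integral_norm (μ := volume.restrict (Set.Ioc 0 t₀))
              (fun s => g s * μ s)
          simpa only [Real.norm_eq_abs] using this
      _ ≤ ∫ s in Set.Ioc 0 t₀, K * |μ s| := by
          refine setIntegral_mono_on hgint.abs (hint.abs.const_mul K) hmes ?_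
          intro s hs
          rw [abs_mul]
          exact mul_le_mul_of_nonneg_right (hK s hs) (abs_nonneg _)
      _ = K * B := by rw [integral_const_mul]
  -- bound on the tail integral
  have hF : ∀ t, 2*t₀ + 1 ≤ t →
      |∫ s in Set.Ioc 0 t₀, (t - s) ^ (β - 1) * μ s| ≤ (t - t₀)^(β-1) * B := by
    intro t ht
    have ht0' : (0:ℝ) < t - t₀ := by linarith
    refine intbnd _ _ (intmul _ ?_) ?_
    · apply ContinuousOn.rpow_const (by fun_prop)
      intro s hs
      exact Or.inl (by intro h; nlinarith [hs.1, hs.2])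
    · intro s hs
      rw [abs_of_nonneg (Real.rpow_nonneg (by nlinarith [hs.1, hs.2]) _)]
      exact Real.rpow_le_rpow_of_nonpos ht0' (by linarith [hs.2]) hγ0.le
  -- step A : a = 0
  have ha : a = 0 := by
    obtain ⟨C, hC, T, hT⟩ := hdecay 1 one_pos
    have key : ∀ t, max T (2*t₀+1) ≤ t → |a| ≤ C / t + (1 / Real.Gamma β) * ((t - t₀)^(β-1) * B) := by
      intro t ht
      have h1 : T ≤ t := le_trans (le_max_left _ _) ht
      have h2 : 2*t₀+1 ≤ t := le_trans (le_max_right _ _) ht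
      have hvt := hrep t (by linarith)
      have : a = v t - (1 / Real.Gamma β) * ∫ s in Set.Ioc 0 t₀, (t - s) ^ (β - 1) * μ s := by
        rw [hvt]; ring
      rw [this]
      calc |v t - (1 / Real.Gamma β) * ∫ s in Set.Ioc 0 t₀, (t - s) ^ (β - 1) * μ s|
          ≤ |v t| + (1 / Real.Gamma β) * |∫ s in Set.Ioc 0 t₀, (t - s) ^ (β - 1) * μ s| := by
            have h0 : |(1 / Real.Gamma β) * ∫ s in Set.Ioc 0 t₀, (t - s) ^ (β - 1) * μ s|
                = (1 / Real.Gamma β) * |∫ s in Set.Ioc 0 t₀, (t - s) ^ (β - 1) * μ s| := by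
              rw [abs_mul, abs_of_nonneg (le_of_lt (by positivity : (0:ℝ) < 1 / Real.Gamma β))]
            calc |v t - (1 / Real.Gamma β) * ∫ s in Set.Ioc 0 t₀, (t - s) ^ (β - 1) * μ s|
                ≤ |v t| + |(1 / Real.Gamma β) * ∫ s in Set.Ioc 0 t₀, (t - s) ^ (β - 1) * μ s| :=
                  abs_sub _ _
              _ = _ := by rw [h0]
        _ ≤ C / t + (1 / Real.Gamma β) * ((t - t₀)^(β-1) * B) := by
            have h3 := hT t h1
            rw [Nat.cast_one, Real.rpow_one] at h3
            have h4 := hF t h2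
            gcongr
    have htend : Tendsto (fun t : ℝ => C / t + (1 / Real.Gamma β) * ((t - t₀)^(β-1) * B))
        atTop (nhds 0) := by
      have l1 : Tendsto (fun t : ℝ => C / t) atTop (nhds 0) :=
        tendsto_const_nhds.div_atTop tendsto_id
      have l2 : Tendsto (fun t : ℝ => (t - t₀)^(β-1)) atTop (nhds 0) := by
        have := (tendsto_rpow_neg_atTop (by linarith : (0:ℝ) < 1 - β)).comp
          (tendsto_atTop_add_const_right atTop (-t₀) tendsto_id)
        simpa [Function.comp_def, sub_eq_add_neg, neg_sub] using this
      have := l1.add (((l2.mul_const B).const_mul (1 / Real.Gamma β)))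
      simpa using this
    have := ge_of_tendsto htend (Filter.eventually_atTop.2 ⟨max T (2*t₀+1), key⟩)
    exact abs_eq_zero.mp (le_antisymm this (abs_nonneg a))
  -- step B : all moments vanish
  set M : ℕ → ℝ := fun k => ∫ s in Set.Ioc 0 t₀, s^k * μ s with hMdef
  have hM : ∀ m : ℕ, M m = 0 := by
    intro m
    induction m using Nat.strong_induction_on with
    | _ m ih =>
    obtain ⟨C₁, hC₁0, htay⟩ := taylor_bound (m+1) (β-1) hγ0
    obtain ⟨C, hC, T, hT⟩ := hdecay (m+1) (Nat.succ_pos m)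
    set K := Real.Gamma β * C + C₁ * t₀^(m+1) * B with hK
    have key : ∀ t, max (max T (2*t₀+1)) 1 ≤ t →
        |binc m (β-1) * M m| ≤ K * t^(-β) := by
      intro t ht
      have htT : T ≤ t := le_trans (le_trans (le_max_left _ _) (le_max_left _ _)) ht
      have ht2 : 2*t₀+1 ≤ t := le_trans (le_trans (le_max_right _ _) (le_max_left _ _)) ht
      have ht1 : (1:ℝ) ≤ t := le_trans (le_max_right _ _) ht
      have ht0' : (0:ℝ) < t := by linarith
      have htm : (0:ℝ) < t^m := by positivity
      have hst : ∀ s ∈ Set.Ioc (0:ℝ) t₀, s/t ∈ Set.Icc (0:ℝ) (1/2) := by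
        intro s hs
        refine ⟨div_nonneg hs.1.le ht0'.le, ?_⟩
        rw [div_le_iff₀ ht0']; nlinarith [hs.2]
      have hst1 : ∀ s ∈ Set.Icc (0:ℝ) t₀, (0:ℝ) < 1 - s/t := by
        intro s hs
        have : s/t < 1 := (div_lt_one ht0').2 (by linarith [hs.2])
        linarith
      -- continuity facts
      have hcont1 : ContinuousOn (fun s : ℝ => (1 - s/t)^(β-1)) (Set.Icc 0 t₀) := by
        apply ContinuousOn.rpow_const (by fun_prop)
        intro s hs
        exact Or.inl (ne_of_gt (hst1 s hs))
      set g₁ : ℝ → ℝ := fun s => ∑ k ∈ Finset.range (m+1), binc k (β-1) * (s/t)^k with hg₁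
      set g₂ : ℝ → ℝ := fun s => (1 - s/t)^(β-1) - g₁ s with hg₂
      have hg₁cont : ContinuousOn g₁ (Set.Icc 0 t₀) := by
        apply Continuous.continuousOn; fun_prop
      -- the rescaled integral
      set G := ∫ s in Set.Ioc 0 t₀, (1 - s/t)^(β-1) * μ s with hGdef
      have hFeq : (∫ s in Set.Ioc 0 t₀, (t-s)^(β-1) * μ s) = t^(β-1) * G := by
        rw [hGdef, ← integral_const_mul]
        refine setIntegral_congr_fun hmes (fun s hs => ?_)
        have h1 : t - s = t * (1 - s/t) := by field_simp
        rw [h1, Real.mul_rpow ht0'.le (by linarith [hst1 s (Set.Ioc_subset_Icc_self hs)])]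
        ring
      -- split G into the main term plus error
      have hsplit : G = binc m (β-1) / t^m * M m + ∫ s in Set.Ioc 0 t₀, g₂ s * μ s := by
        have e1 : ∀ s ∈ Set.Ioc (0:ℝ) t₀, (1 - s/t)^(β-1) * μ s
            = (∑ k ∈ Finset.range (m+1), (binc k (β-1) / t^k) * (s^k * μ s)) + g₂ s * μ s := by
          intro s hs
          rw [hg₂]
          have : g₁ s * μ s = ∑ k ∈ Finset.range (m+1), (binc k (β-1) / t^k) * (s^k * μ s) := by
            rw [hg₁, Finset.sum_mul]
            refine Finset.sum_congr rfl (fun k _ => ?_)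
            rw [div_pow]
            field_simp
          rw [← this]; ring
        have i1 : IntegrableOn
            (fun s => ∑ k ∈ Finset.range (m+1), (binc k (β-1) / t^k) * (s^k * μ s))
            (Set.Ioc 0 t₀) := by
          apply integrable_finset_sum
          intro k _
          exact ((intmul (fun s => s^k) (by fun_prop))).const_mul _
        have i2 : IntegrableOn (fun s => g₂ s * μ s) (Set.Ioc 0 t₀) :=
          intmul g₂ (hcont1.sub hg₁cont)
        calc G = ∫ s in Set.Ioc 0 t₀,
              ((∑ k ∈ Finset.range (m+1), (binc k (β-1) / t^k) * (s^k * μ s)) + g₂ s * μ s) :=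
              setIntegral_congr_fun hmes e1
          _ = (∫ s in Set.Ioc 0 t₀,
                ∑ k ∈ Finset.range (m+1), (binc k (β-1) / t^k) * (s^k * μ s))
              + ∫ s in Set.Ioc 0 t₀, g₂ s * μ s := integral_add i1 i2
          _ = (∑ k ∈ Finset.range (m+1), (binc k (β-1) / t^k) * M k)
              + ∫ s in Set.Ioc 0 t₀, g₂ s * μ s := by
              congr 1
              rw [integral_finset_sum _ (fun k _ =>
                ((intmul (fun s => s^k) (by fun_prop))).const_mul _)]
              exact Finset.sum_congr rfl (fun k _ => integral_const_mul _ _)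
          _ = binc m (β-1) / t^m * M m + ∫ s in Set.Ioc 0 t₀, g₂ s * μ s := by
              congr 1
              rw [Finset.sum_range_succ]
              rw [Finset.sum_eq_zero (fun k hk => by
                rw [ih k (Finset.mem_range.mp hk), mul_zero])]
              ring
      -- error bound
      have herr : |∫ s in Set.Ioc 0 t₀, g₂ s * μ s| ≤ C₁ * t₀^(m+1) / t^(m+1) * B := by
        refine intbnd _ _ (intmul g₂ (hcont1.sub hg₁cont)) (fun s hs => ?_)
        have h1 := htay (s/t) (hst s hs)
        have h2 : (s/t)^(m+1) ≤ (t₀/t)^(m+1) := by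
          apply pow_le_pow_left₀ (div_nonneg hs.1.le ht0'.le)
          exact (div_le_div_iff_of_pos_right ht0').2 hs.2
        calc |g₂ s| ≤ C₁ * (s/t)^(m+1) := h1
          _ ≤ C₁ * (t₀/t)^(m+1) := by gcongr
          _ = C₁ * t₀^(m+1) / t^(m+1) := by rw [div_pow]; ring
      -- bound on G itself
      have hGb : |G| ≤ Real.Gamma β * C * t^(-β) / t^m := by
        have hvt := hrep t (by linarith)
        rw [ha, zero_add] at hvt
        have hGF : G = t^(-(β-1)) * ∫ s in Set.Ioc 0 t₀, (t-s)^(β-1) * μ s := by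
          rw [hFeq, ← mul_assoc, ← Real.rpow_add ht0', neg_add_cancel, Real.rpow_zero, one_mul]
        have hFv : (∫ s in Set.Ioc 0 t₀, (t-s)^(β-1) * μ s) = Real.Gamma β * v t := by
          rw [hvt]; field_simp
        have hvb' : |v t| ≤ C / t ^ ((m+1 : ℕ) : ℝ) := hT t htT
        rw [hGF, hFv]
        rw [abs_mul, abs_mul, abs_of_nonneg (Real.rpow_nonneg ht0'.le _),
          abs_of_nonneg hΓ.le]
        have hrpowpos : (0:ℝ) < t ^ ((m+1 : ℕ) : ℝ) := Real.rpow_pos_of_pos ht0' _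
        have hexp : t^(-(β-1)) / t^((m+1 : ℕ) : ℝ) = t^(-β)/t^m := by
          rw [← Real.rpow_natCast t m, ← Real.rpow_sub ht0', ← Real.rpow_sub ht0']
          congr 1
          push_cast
          ring
        calc t^(-(β-1)) * (Real.Gamma β * |v t|)
            ≤ t^(-(β-1)) * (Real.Gamma β * (C / t ^ ((m+1 : ℕ) : ℝ))) := by gcongr
          _ = Real.Gamma β * C * (t^(-(β-1)) / t^((m+1 : ℕ) : ℝ)) := by ring
          _ = Real.Gamma β * C * t^(-β) / t^m := by rw [hexp]; ring
      -- combine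
      have hmain : |binc m (β-1) * M m| / t^m
          ≤ Real.Gamma β * C * t^(-β) / t^m + C₁ * t₀^(m+1) / t^(m+1) * B := by
        have hdiff : G - binc m (β-1) / t^m * M m = ∫ s in Set.Ioc 0 t₀, g₂ s * μ s := by
          rw [hsplit]; ring
        have h1 : |binc m (β-1) / t^m * M m|
            ≤ |G| + |∫ s in Set.Ioc 0 t₀, g₂ s * μ s| := by
          have heq : binc m (β-1) / t^m * M m = G - (G - binc m (β-1) / t^m * M m) := by ring
          rw [heq]
          calc |G - (G - binc m (β-1) / t^m * M m)|
              ≤ |G| + |G - binc m (β-1) / t^m * M m| := abs_sub _ _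
            _ = |G| + |∫ s in Set.Ioc 0 t₀, g₂ s * μ s| := by rw [hdiff]
        have h2 : |binc m (β-1) / t^m * M m| = |binc m (β-1) * M m| / t^m := by
          rw [div_mul_eq_mul_div, abs_div, abs_of_pos htm]
        rw [← h2]
        exact le_trans h1 (add_le_add hGb herr)
      have hmain2 : |binc m (β-1) * M m|
          ≤ Real.Gamma β * C * t^(-β) + C₁ * t₀^(m+1) * B / t := by
        have := (div_le_iff₀ htm).mp hmain
        calc |binc m (β-1) * M m|
            = |binc m (β-1) * M m| / t^m * t^m := by field_simp
          _ ≤ (Real.Gamma β * C * t^(-β) / t^m + C₁ * t₀^(m+1) / t^(m+1) * B) * t^m := by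
              gcongr
          _ = Real.Gamma β * C * t^(-β) + C₁ * t₀^(m+1) * B / t := by
              rw [pow_succ]
              field_simp
              ring
      have h1t : 1/t ≤ t^(-β:ℝ) := by
        rw [one_div, ← Real.rpow_neg_one t]
        exact Real.rpow_le_rpow_of_exponent_le ht1 (by linarith)
      calc |binc m (β-1) * M m|
          ≤ Real.Gamma β * C * t^(-β) + C₁ * t₀^(m+1) * B / t := hmain2
        _ ≤ Real.Gamma β * C * t^(-β) + C₁ * t₀^(m+1) * B * t^(-β) := by
            have : C₁ * t₀^(m+1) * B / t = C₁ * t₀^(m+1) * B * (1/t) := by ring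
            rw [this]
            gcongr
        _ = K * t^(-β) := by rw [hK]; ring
    have htend : Tendsto (fun t : ℝ => K * t^(-β)) atTop (nhds 0) := by
      have := (tendsto_rpow_neg_atTop hβ0).const_mul K
      simpa using this
    have h0 := ge_of_tendsto htend (Filter.eventually_atTop.2 ⟨_, key⟩)
    have hz : binc m (β-1) * M m = 0 := abs_eq_zero.mp (le_antisymm h0 (abs_nonneg _))
    exact (mul_eq_zero.mp hz).resolve_left (ne_of_gt (binc_pos m (β-1) hγ0))
    -- step C : conclude μ = 0 a.e.
  have hpoly : ∀ P : Polynomial ℝ, (∫ s in Set.Ioc 0 t₀, Polynomial.eval s P * μ s) = 0 := by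
    intro P
    have e1 : ∀ s ∈ Set.Ioc (0:ℝ) t₀, Polynomial.eval s P * μ s
        = ∑ i ∈ Finset.range (P.natDegree + 1), P.coeff i * (s^i * μ s) := by
      intro s _
      rw [Polynomial.eval_eq_sum_range, Finset.sum_mul]
      exact Finset.sum_congr rfl (fun i _ => by ring)
    calc (∫ s in Set.Ioc 0 t₀, Polynomial.eval s P * μ s)
        = ∫ s in Set.Ioc 0 t₀, ∑ i ∈ Finset.range (P.natDegree + 1), P.coeff i * (s^i * μ s) :=
          setIntegral_congr_fun hmes e1
      _ = ∑ i ∈ Finset.range (P.natDegree + 1), P.coeff i * M i := by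
          rw [integral_finset_sum _ (fun i _ =>
            ((intmul (fun s => s^i) (by fun_prop))).const_mul _)]
          exact Finset.sum_congr rfl (fun i _ => integral_const_mul _ _)
      _ = 0 := Finset.sum_eq_zero (fun i _ => by rw [hM i, mul_zero])
  have hcont0 : ∀ g : ℝ → ℝ, Continuous g → (∫ s in Set.Ioc 0 t₀, g s * μ s) = 0 := by
    intro g hg
    have hb : ∀ ε : ℝ, 0 < ε → |∫ s in Set.Ioc 0 t₀, g s * μ s| ≤ ε * B := by
      intro ε hε
      obtain ⟨P, hP⟩ := exists_polynomial_near_of_continuousOn 0 t₀ g hg.continuousOn ε hε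
      have hsplit : (∫ s in Set.Ioc 0 t₀, g s * μ s)
          = (∫ s in Set.Ioc 0 t₀, (g s - Polynomial.eval s P) * μ s)
            + ∫ s in Set.Ioc 0 t₀, Polynomial.eval s P * μ s := by
        have hadd := integral_add (intmul (fun s => g s - Polynomial.eval s P)
            ((hg.continuousOn).sub P.continuous.continuousOn))
          (intmul _ P.continuous.continuousOn)
        beta_reduce at hadd
        rw [← hadd]
        refine setIntegral_congr_fun hmes (fun s _ => by ring)
      rw [hsplit, hpoly P, add_zero]
      refine intbnd _ _ (intmul _ ((hg.continuousOn).sub P.continuous.continuousOn))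
        (fun s hs => ?_)
      have := hP s (Set.Ioc_subset_Icc_self hs)
      rw [abs_sub_comm] at this
      exact this.le
    rcases eq_or_lt_of_le hB0 with hBz | hBp
    · have := hb 1 one_pos
      rw [← hBz, mul_zero] at this
      exact abs_eq_zero.mp (le_antisymm this (abs_nonneg _))
    · by_contra hX
      have hX' : 0 < |∫ s in Set.Ioc 0 t₀, g s * μ s| := abs_pos.2 hX
      have h2 := hb (|∫ s in Set.Ioc 0 t₀, g s * μ s| / (2*B)) (by positivity)
      rw [div_mul_eq_mul_div] at h2
      have : |∫ s in Set.Ioc 0 t₀, g s * μ s| * B / (2*B)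
          = |∫ s in Set.Ioc 0 t₀, g s * μ s| / 2 := by
        field_simp
      rw [this] at h2
      linarith
  refine ⟨ha, ?_⟩
  apply ae_eq_zero_of_integral_contDiff_smul_eq_zero hint.locallyIntegrable
  intro g hgd _
  have := hcont0 g hgd.continuous
  simpa [smul_eq_mul] using this
end

section
/- Let $a \in \mathbb{R}$, $t_0 > 0$, $\beta \in (0,1)$, and $\mu \in L^1(0, t_0)$, and define $v(t) = a + \frac{1}{\Gamma(\beta)}\int_0^{t_0}(t-s)^{\beta-1}\mu(s)\,ds$ for $t > t_0$. If $v(t) = 0$ for all $t > t_0$, then $a = 0$ and $\mu = 0$ almost everywhere on $(0, t_0)$. -/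
open MeasureTheory Filter Set
open scoped Topology

namespace Stmt15

lemma kb {γ x c d : ℝ} (hc : 0 < c) (hcx : c ≤ x) (hxd : x ≤ d) :
    x ^ γ ≤ c ^ γ + d ^ γ := by
  have hx : 0 < x := hc.trans_le hcx
  have hd : 0 < d := hx.trans_le hxd
  rcases le_or_gt 0 γ with h | h
  · have h1 : x ^ γ ≤ d ^ γ := Real.rpow_le_rpow hx.le hxd h
    have h2 : (0:ℝ) < c ^ γ := Real.rpow_pos_of_pos hc γ
    linarith
  · have h1 : x ^ γ ≤ c ^ γ := Real.rpow_le_rpow_of_nonpos hc hcx h.le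
    have h2 : (0:ℝ) < d ^ γ := Real.rpow_pos_of_pos hd γ
    linarith

variable {t₀ : ℝ} {μ : ℝ → ℝ}

lemma meas_aux (hμ : IntegrableOn μ (Ioc 0 t₀)) (m : ℕ) (γ : ℝ) {t : ℝ} (ht : t₀ < t) :
    AEStronglyMeasurable (fun s : ℝ => s ^ m * (t - s) ^ γ * μ s)
      (volume.restrict (Ioc 0 t₀)) := by
  refine AEStronglyMeasurable.mul ?_ hμ.1
  refine ContinuousOn.aestronglyMeasurable ?_ measurableSet_Ioc
  refine (continuousOn_pow m).mul (ContinuousOn.rpow_const ?_ fun s hs => Or.inl ?_)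
  · exact (continuous_const.sub continuous_id).continuousOn
  · have : s ≤ t₀ := hs.2
    intro h; rw [sub_eq_zero] at h; linarith

lemma integ (ht₀ : 0 < t₀) (hμ : IntegrableOn μ (Ioc 0 t₀)) (m : ℕ) (γ : ℝ) {t : ℝ}
    (ht : t₀ < t) :
    IntegrableOn (fun s => s ^ m * (t - s) ^ γ * μ s) (Ioc 0 t₀) := by
  apply Integrable.bdd_mul (c := t₀ ^ m * ((t - t₀) ^ γ + t ^ γ)) hμ
  · refine ContinuousOn.aestronglyMeasurable ?_ measurableSet_Ioc
    refine (continuousOn_pow m).mul (ContinuousOn.rpow_const ?_ fun s hs => Or.inl ?_)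
    · exact (continuous_const.sub continuous_id).continuousOn
    · have : s ≤ t₀ := hs.2
      intro h; rw [sub_eq_zero] at h; linarith
  · rw [ae_restrict_iff' measurableSet_Ioc]
    refine ae_of_all _ fun s hs => ?_
    have h1 : (0:ℝ) < s := hs.1
    have h2 : s ≤ t₀ := hs.2
    have hts : 0 < t - s := by linarith
    rw [Real.norm_eq_abs, abs_mul, abs_of_nonneg (le_of_lt (Real.rpow_pos_of_pos hts γ)),
      abs_pow, abs_of_nonneg h1.le]
    have hb : (t - s) ^ γ ≤ (t - t₀) ^ γ + t ^ γ :=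
      kb (by linarith) (by linarith) (by linarith)
    have hsm : s ^ m ≤ t₀ ^ m := pow_le_pow_left₀ h1.le h2 m
    have h3 := Real.rpow_pos_of_pos hts γ
    have h4 := pow_nonneg h1.le m
    nlinarith [Real.rpow_pos_of_pos (show (0:ℝ) < t - t₀ by linarith) γ,
      Real.rpow_pos_of_pos (show (0:ℝ) < t by linarith) γ]


lemma deriv_step (ht₀ : 0 < t₀) (hμ : IntegrableOn μ (Ioc 0 t₀)) (m : ℕ) (γ : ℝ) {t : ℝ}
    (ht : t₀ < t) :
    HasDerivAt (fun x => ∫ s in Ioc 0 t₀, s ^ m * (x - s) ^ γ * μ s)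
      (γ * ∫ s in Ioc 0 t₀, s ^ m * (t - s) ^ (γ - 1) * μ s) t := by
  set ε := (t - t₀) / 2 with hεdef
  have hεpos : 0 < ε := by simp only [hεdef]; linarith
  have key := hasDerivAt_integral_of_dominated_loc_of_deriv_le
    (μ := volume.restrict (Ioc 0 t₀)) (𝕜 := ℝ)
    (F := fun x s => s ^ m * (x - s) ^ γ * μ s)
    (F' := fun x s => s ^ m * (γ * (x - s) ^ (γ - 1)) * μ s)
    (x₀ := t) (s := Metric.ball t ε)
    (bound := fun s => t₀ ^ m * (|γ| * (ε ^ (γ-1) + (t + ε) ^ (γ-1))) * ‖μ s‖)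
    (Metric.ball_mem_nhds t hεpos) ?_ ?_ ?_ ?_ ?_ ?_
  · have h2 := key.2
    have : (fun s => s ^ m * (γ * (t - s) ^ (γ - 1)) * μ s)
        = fun s => γ * (s ^ m * (t - s) ^ (γ - 1) * μ s) := by funext s; ring
    rwa [this, integral_const_mul] at h2
  -- measurability of F x for x near t
  · filter_upwards [Ioi_mem_nhds ht] with x hx
    exact meas_aux hμ m γ hx
  · exact integ ht₀ hμ m γ ht
  -- measurability of F' t
  · refine AEStronglyMeasurable.mul ?_ hμ.1
    refine ContinuousOn.aestronglyMeasurable ?_ measurableSet_Ioc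
    refine (continuousOn_pow m).mul (continuousOn_const.mul
      (ContinuousOn.rpow_const ?_ fun s hs => Or.inl ?_))
    · exact (continuous_const.sub continuous_id).continuousOn
    · have : s ≤ t₀ := hs.2
      intro h; rw [sub_eq_zero] at h; linarith
  -- bound
  · rw [ae_restrict_iff' measurableSet_Ioc]
    refine ae_of_all _ fun s hs x hx => ?_
    have h1 : (0:ℝ) < s := hs.1
    have h2 : s ≤ t₀ := hs.2
    rw [Metric.mem_ball, Real.dist_eq, abs_lt] at hx
    have hxs : ε ≤ x - s := by simp only [hεdef] at *; linarith
    have hxd : x - s ≤ t + ε := by linarith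
    have hb : (x - s) ^ (γ - 1) ≤ ε ^ (γ-1) + (t + ε) ^ (γ-1) := kb hεpos hxs hxd
    have hxspos : 0 < x - s := lt_of_lt_of_le hεpos hxs
    rw [norm_mul, norm_mul, Real.norm_eq_abs, Real.norm_eq_abs, abs_mul, abs_pow,
      abs_of_nonneg h1.le, abs_of_nonneg (le_of_lt (Real.rpow_pos_of_pos hxspos _))]
    have hsm : s ^ m ≤ t₀ ^ m := pow_le_pow_left₀ h1.le h2 m
    have h3 := Real.rpow_pos_of_pos hxspos (γ - 1)
    have h4 := pow_nonneg h1.le m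
    have h5 : (0:ℝ) ≤ |γ| := abs_nonneg γ
    have h6 := norm_nonneg (μ s)
    have h7 := Real.rpow_pos_of_pos hεpos (γ-1)
    have h8 := Real.rpow_pos_of_pos (show (0:ℝ) < t + ε by linarith) (γ-1)
    have hmain : s ^ m * (|γ| * (x - s) ^ (γ - 1)) ≤
        t₀ ^ m * (|γ| * (ε ^ (γ-1) + (t+ε) ^ (γ-1))) :=
      mul_le_mul hsm (mul_le_mul_of_nonneg_left hb h5) (mul_nonneg h5 h3.le)
        (pow_nonneg (h1.le.trans h2) m)
    exact mul_le_mul_of_nonneg_right hmain h6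
  -- bound integrable
  · exact (hμ.norm.const_mul _)
  -- differentiability
  · rw [ae_restrict_iff' measurableSet_Ioc]
    refine ae_of_all _ fun s hs x hx => ?_
    have h1 : (0:ℝ) < s := hs.1
    have h2 : s ≤ t₀ := hs.2
    rw [Metric.mem_ball, Real.dist_eq, abs_lt] at hx
    have hxspos : 0 < x - s := by simp only [hεdef] at *; linarith
    have hd1 : HasDerivAt (fun y : ℝ => y - s) 1 x := (hasDerivAt_id x).sub_const s
    have hd2 : HasDerivAt (fun y : ℝ => y ^ γ) (γ * (x - s) ^ (γ - 1)) (x - s) :=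
      Real.hasDerivAt_rpow_const (Or.inl hxspos.ne')
    have hd3 := (hd2.comp x hd1).const_mul ((s:ℝ) ^ m)
    have hd4 := hd3.mul_const (μ s)
    rw [mul_one] at hd4
    exact hd4

lemma stage1 (ht₀ : 0 < t₀) (hμ : IntegrableOn μ (Ioc 0 t₀)) {β : ℝ} (hβ1 : β < 1)
    (h0 : ∀ t, t₀ < t → ∫ s in Ioc 0 t₀, s ^ (0:ℕ) * (t - s) ^ (β - 1) * μ s = 0) :
    ∀ n : ℕ, ∀ t, t₀ < t →
      ∫ s in Ioc 0 t₀, s ^ (0:ℕ) * (t - s) ^ (β - 1 - (n:ℝ)) * μ s = 0 := by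
  intro n
  induction n with
  | zero => intro t ht; simpa using h0 t ht
  | succ n ih =>
    intro t ht
    have hder := deriv_step ht₀ hμ 0 (β - 1 - (n:ℝ)) ht
    have hzero : (fun x => ∫ s in Ioc 0 t₀, s ^ (0:ℕ) * (x - s) ^ (β - 1 - (n:ℝ)) * μ s)
        =ᶠ[𝓝 t] fun _ => (0:ℝ) := by
      filter_upwards [Ioi_mem_nhds ht] with x hx
      exact ih x hx
    have h2 : HasDerivAt (fun _ : ℝ => (0:ℝ))
        ((β - 1 - (n:ℝ)) *
          ∫ s in Ioc 0 t₀, s ^ (0:ℕ) * (t - s) ^ (β - 1 - (n:ℝ) - 1) * μ s) t :=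
      hder.congr_of_eventuallyEq hzero.symm
    have h3 := h2.unique (hasDerivAt_const t (0:ℝ))
    have hne : (β - 1 - (n:ℝ)) ≠ 0 := by
      have : (0:ℝ) ≤ n := Nat.cast_nonneg n
      intro h; nlinarith
    have h4 := (mul_eq_zero.mp h3).resolve_left hne
    have hcast : β - 1 - ((n:ℝ) + 1) = β - 1 - (n:ℝ) - 1 := by ring
    push_cast
    rw [hcast]
    exact h4

lemma stage2 (ht₀ : 0 < t₀) (hμ : IntegrableOn μ (Ioc 0 t₀)) {β : ℝ} (hβ1 : β < 1)
    (h0 : ∀ t, t₀ < t → ∫ s in Ioc 0 t₀, s ^ (0:ℕ) * (t - s) ^ (β - 1) * μ s = 0) :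
    ∀ m n : ℕ, m ≤ n → ∀ t, t₀ < t →
      ∫ s in Ioc 0 t₀, s ^ m * (t - s) ^ (β - 1 - (n:ℝ)) * μ s = 0 := by
  intro m
  induction m with
  | zero => intro n _ t ht; exact stage1 ht₀ hμ hβ1 h0 n t ht
  | succ m ih =>
    intro n hmn t ht
    obtain ⟨n', rfl⟩ : ∃ n', n = n' + 1 := ⟨n - 1, by omega⟩
    have h1 := ih n' (by omega) t ht
    have h2 := ih (n'+1) (by omega) t ht
    set γ' : ℝ := β - 1 - (n':ℝ) with hγ'
    have hcast : β - 1 - (((n'+1:ℕ)):ℝ) = γ' - 1 := by push_cast; ring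
    rw [hcast] at h2 ⊢
    have key : (∫ s in Ioc 0 t₀, s ^ (m+1) * (t - s) ^ (γ' - 1) * μ s)
        = t * (∫ s in Ioc 0 t₀, s ^ m * (t - s) ^ (γ' - 1) * μ s)
          - ∫ s in Ioc 0 t₀, s ^ m * (t - s) ^ γ' * μ s := by
      rw [← integral_const_mul, ← integral_sub
        ((integ ht₀ hμ m (γ' - 1) ht).const_mul t) (integ ht₀ hμ m γ' ht)]
      refine setIntegral_congr_fun measurableSet_Ioc fun s hs => ?_
      have hs1 : (0:ℝ) < s := hs.1
      have hts : 0 < t - s := by have := hs.2; linarith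
      have hsplit : (t - s) ^ γ' = (t - s) ^ (γ' - 1) * (t - s) := by
        have h := Real.rpow_add_one hts.ne' (γ' - 1)
        rwa [sub_add_cancel] at h
      simp only [hsplit]
      ring
    rw [key, h1, h2, mul_zero, sub_zero]

lemma limA (ht₀ : 0 < t₀) (hμ : IntegrableOn μ (Ioc 0 t₀)) {β : ℝ} (hβ1 : β < 1) :
    Tendsto (fun t => ∫ s in Ioc 0 t₀, (t - s) ^ (β - 1) * μ s) atTop (𝓝 0) := by
  suffices main : Tendsto (fun t => ∫ s in Ioc 0 t₀, (t - s) ^ (β - 1) * μ s) atTop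
      (𝓝 (∫ s in Ioc 0 t₀, (0:ℝ))) by simpa using main
  refine tendsto_integral_filter_of_dominated_convergence (fun s => ‖μ s‖) ?_ ?_ hμ.norm ?_
  · filter_upwards [eventually_gt_atTop t₀] with t ht
    refine (meas_aux hμ 0 (β-1) ht).congr (ae_of_all _ fun s => ?_)
    simp
  · filter_upwards [eventually_ge_atTop (t₀ + 1)] with t ht
    rw [ae_restrict_iff' measurableSet_Ioc]
    refine ae_of_all _ fun s hs => ?_
    have hs1 : (0:ℝ) < s := hs.1
    have hs2 : s ≤ t₀ := hs.2
    have h1 : (1:ℝ) ≤ t - s := by linarith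
    have h2 : (t - s) ^ (β - 1) ≤ 1 :=
      Real.rpow_le_one_of_one_le_of_nonpos h1 (by linarith)
    rw [norm_mul]
    have h3 : ‖(t - s) ^ (β - 1)‖ ≤ 1 := by
      rw [Real.norm_eq_abs, abs_of_nonneg (Real.rpow_nonneg (by linarith) _)]; exact h2
    calc ‖(t - s) ^ (β - 1)‖ * ‖μ s‖ ≤ 1 * ‖μ s‖ :=
          mul_le_mul_of_nonneg_right h3 (norm_nonneg _)
      _ = ‖μ s‖ := one_mul _
  · rw [ae_restrict_iff' measurableSet_Ioc]
    refine ae_of_all _ fun s hs => ?_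
    have hrw : Tendsto (fun t : ℝ => (t - s) ^ (β - 1)) atTop (𝓝 0) := by
      have hb : Tendsto (fun t : ℝ => t - s) atTop atTop :=
        tendsto_atTop_add_const_right atTop (-s) tendsto_id
      have hr : Tendsto (fun x : ℝ => x ^ (-(1 - β))) atTop (𝓝 0) :=
        tendsto_rpow_neg_atTop (by linarith)
      have := hr.comp hb
      simpa [Function.comp_def, show -(1-β) = β - 1 by ring] using this
    simpa using hrw.mul_const (μ s)

lemma limM (ht₀ : 0 < t₀) (hμ : IntegrableOn μ (Ioc 0 t₀)) (m : ℕ) (γ : ℝ) :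
    Tendsto (fun t => ∫ s in Ioc 0 t₀, s ^ m * ((t - s)/t) ^ γ * μ s) atTop
      (𝓝 (∫ s in Ioc 0 t₀, s ^ m * μ s)) := by
  refine tendsto_integral_filter_of_dominated_convergence
    (fun s => t₀ ^ m * ((1/(t₀+1)) ^ γ + 1) * ‖μ s‖) ?_ ?_ (hμ.norm.const_mul _) ?_
  · filter_upwards [eventually_ge_atTop (t₀ + 1)] with t ht
    refine AEStronglyMeasurable.mul ?_ hμ.1
    refine ContinuousOn.aestronglyMeasurable ?_ measurableSet_Ioc
    refine (continuousOn_pow m).mul (ContinuousOn.rpow_const ?_ fun s hs => Or.inl ?_)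
    · exact ((continuous_const.sub continuous_id).div_const t).continuousOn
    · have hs1 : (0:ℝ) < s := hs.1
      have hs2 : s ≤ t₀ := hs.2
      have htpos : (0:ℝ) < t := by linarith
      have : 0 < (t - s)/t := div_pos (by linarith) htpos
      exact this.ne'
  · filter_upwards [eventually_ge_atTop (t₀ + 1)] with t ht
    rw [ae_restrict_iff' measurableSet_Ioc]
    refine ae_of_all _ fun s hs => ?_
    have hs1 : (0:ℝ) < s := hs.1
    have hs2 : s ≤ t₀ := hs.2
    have htpos : (0:ℝ) < t := by linarith
    have hc : (1/(t₀+1)) ≤ (t - s)/t := by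
      rw [div_le_div_iff₀ (by linarith) htpos]
      nlinarith
    have hd : (t - s)/t ≤ 1 := by
      rw [div_le_one htpos]; linarith
    have hkb : ((t - s)/t) ^ γ ≤ (1/(t₀+1)) ^ γ + 1 := by
      have := kb (γ := γ) (x := (t-s)/t) (c := 1/(t₀+1)) (d := 1)
        (by positivity) hc hd
      simpa [Real.one_rpow] using this
    rw [norm_mul, norm_mul, Real.norm_eq_abs, Real.norm_eq_abs, abs_pow,
      abs_of_nonneg hs1.le,
      abs_of_nonneg (Real.rpow_nonneg (le_trans (by positivity) hc) γ)]
    have hsm : s ^ m ≤ t₀ ^ m := pow_le_pow_left₀ hs1.le hs2 m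
    have hmain : s ^ m * ((t - s)/t) ^ γ ≤ t₀ ^ m * ((1/(t₀+1)) ^ γ + 1) :=
      mul_le_mul hsm hkb (Real.rpow_nonneg (le_trans (by positivity) hc) γ)
        (pow_nonneg (hs1.le.trans hs2) m)
    exact mul_le_mul_of_nonneg_right hmain (norm_nonneg _)
  · rw [ae_restrict_iff' measurableSet_Ioc]
    refine ae_of_all _ fun s hs => ?_
    have hs1 : (0:ℝ) < s := hs.1
    have hinner : Tendsto (fun t : ℝ => (t - s)/t) atTop (𝓝 1) := by
      have h1 : Tendsto (fun t : ℝ => 1 - s/t) atTop (𝓝 (1 - 0)) :=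
        tendsto_const_nhds.sub (tendsto_const_nhds.div_atTop tendsto_id)
      rw [sub_zero] at h1
      refine h1.congr' ?_
      filter_upwards [eventually_gt_atTop (0:ℝ)] with t ht
      field_simp
    have hpow : Tendsto (fun t : ℝ => ((t - s)/t) ^ γ) atTop (𝓝 1) := by
      have := hinner.rpow_const (p := γ) (Or.inl one_ne_zero)
      simpa [Real.one_rpow] using this
    have := (hpow.const_mul ((s:ℝ) ^ m)).mul_const (μ s)
    simpa [mul_one] using this

lemma powmul_int (ht₀ : 0 < t₀) (hμ : IntegrableOn μ (Ioc 0 t₀)) (m : ℕ) :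
    IntegrableOn (fun s => s ^ m * μ s) (Ioc 0 t₀) := by
  apply Integrable.bdd_mul (c := t₀ ^ m) hμ
  · exact ((continuousOn_pow m).aestronglyMeasurable measurableSet_Ioc)
  · rw [ae_restrict_iff' measurableSet_Ioc]
    refine ae_of_all _ fun s hs => ?_
    rw [Real.norm_eq_abs, abs_pow, abs_of_nonneg hs.1.le]
    exact pow_le_pow_left₀ hs.1.le hs.2 m

lemma moments (ht₀ : 0 < t₀) (hμ : IntegrableOn μ (Ioc 0 t₀)) {β : ℝ} (hβ1 : β < 1)
    (h0 : ∀ t, t₀ < t → ∫ s in Ioc 0 t₀, s ^ (0:ℕ) * (t - s) ^ (β - 1) * μ s = 0) :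
    ∀ m : ℕ, ∫ s in Ioc 0 t₀, s ^ m * μ s = 0 := by
  intro m
  set γ : ℝ := β - 1 - (m:ℝ) with hγ
  have hK := stage2 ht₀ hμ hβ1 h0 m m le_rfl
  have hφzero : ∀ t, t₀ < t →
      ∫ s in Ioc 0 t₀, s ^ m * ((t - s)/t) ^ γ * μ s = 0 := by
    intro t ht
    have htpos : (0:ℝ) < t := lt_trans ht₀ ht
    have hcongr : ∫ s in Ioc 0 t₀, s ^ m * ((t - s)/t) ^ γ * μ s
        = ∫ s in Ioc 0 t₀, (t ^ γ)⁻¹ * (s ^ m * (t - s) ^ γ * μ s) := by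
      refine setIntegral_congr_fun measurableSet_Ioc fun s hs => ?_
      have h1 : (0:ℝ) ≤ t - s := by have := hs.2; linarith
      rw [Real.div_rpow h1 htpos.le]
      field_simp
    rw [hcongr, integral_const_mul, hK t ht, mul_zero]
  have h1 := limM ht₀ hμ m γ
  have h2 : Tendsto (fun t => ∫ s in Ioc 0 t₀, s ^ m * ((t - s)/t) ^ γ * μ s)
      atTop (𝓝 0) := by
    refine tendsto_const_nhds.congr' ?_
    filter_upwards [eventually_gt_atTop t₀] with t ht
    exact (hφzero t ht).symm
  exact tendsto_nhds_unique h1 h2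

lemma polyzero (ht₀ : 0 < t₀) (hμ : IntegrableOn μ (Ioc 0 t₀))
    (hmom : ∀ m : ℕ, ∫ s in Ioc 0 t₀, s ^ m * μ s = 0) (p : Polynomial ℝ) :
    ∫ s in Ioc 0 t₀, p.eval s * μ s = 0 := by
  have hstep : ∫ s in Ioc 0 t₀, p.eval s * μ s
      = ∫ s in Ioc 0 t₀, ∑ i ∈ Finset.range (p.natDegree + 1),
          p.coeff i * (s ^ i * μ s) := by
    refine setIntegral_congr_fun measurableSet_Ioc fun s _ => ?_
    rw [Polynomial.eval_eq_sum_range, Finset.sum_mul]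
    exact Finset.sum_congr rfl fun i _ => by ring
  rw [hstep, integral_finset_sum _
    (fun i _ => (powmul_int ht₀ hμ i).const_mul (p.coeff i))]
  refine Finset.sum_eq_zero fun i _ => ?_
  rw [integral_const_mul, hmom i, mul_zero]

lemma contzero (ht₀ : 0 < t₀) (hμ : IntegrableOn μ (Ioc 0 t₀))
    (hmom : ∀ m : ℕ, ∫ s in Ioc 0 t₀, s ^ m * μ s = 0) (g : ℝ → ℝ)
    (hg : Continuous g) :
    ∫ s in Ioc 0 t₀, g s * μ s = 0 := by
  set B : ℝ := (∫ s in Ioc 0 t₀, ‖μ s‖) + 1 with hB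
  have hIn : (0:ℝ) ≤ ∫ s in Ioc 0 t₀, ‖μ s‖ := integral_nonneg fun s => norm_nonneg _
  have hBpos : 0 < B := by rw [hB]; linarith
  have hgint : IntegrableOn (fun s => g s * μ s) (Ioc 0 t₀) := by
    obtain ⟨C, hC⟩ := (isCompact_Icc (a := (0:ℝ)) (b := t₀)).exists_bound_of_continuousOn
      hg.continuousOn
    apply Integrable.bdd_mul (c := C) hμ (hg.aestronglyMeasurable.restrict)
    rw [ae_restrict_iff' measurableSet_Ioc]
    exact ae_of_all _ fun s hs => hC s ⟨hs.1.le, hs.2⟩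
  have key : ∀ ε : ℝ, 0 < ε → |∫ s in Ioc 0 t₀, g s * μ s| ≤ ε := by
    intro ε hε
    obtain ⟨p, hp⟩ := exists_polynomial_near_of_continuousOn 0 t₀ g hg.continuousOn
      (ε/B) (by positivity)
    have hpint : IntegrableOn (fun s => p.eval s * μ s) (Ioc 0 t₀) := by
      obtain ⟨C, hC⟩ := (isCompact_Icc (a := (0:ℝ)) (b := t₀)).exists_bound_of_continuousOn
        (p.continuous_aeval.continuousOn (s := Icc 0 t₀))
      apply Integrable.bdd_mul (c := C) hμ (p.continuous_aeval.aestronglyMeasurable.restrict)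
      rw [ae_restrict_iff' measurableSet_Ioc]
      exact ae_of_all _ fun s hs => hC s ⟨hs.1.le, hs.2⟩
    have hsub : ∫ s in Ioc 0 t₀, g s * μ s
        = ∫ s in Ioc 0 t₀, (g s - p.eval s) * μ s := by
      have := integral_sub hgint hpint
      rw [polyzero ht₀ hμ hmom p] at *
      have h2 : ∫ s in Ioc 0 t₀, (g s * μ s - p.eval s * μ s)
          = ∫ s in Ioc 0 t₀, (g s - p.eval s) * μ s := by
        refine setIntegral_congr_fun measurableSet_Ioc fun s _ => by ring
      rw [← h2, this]
      ring
    rw [hsub]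
    have hbound : |∫ s in Ioc 0 t₀, (g s - p.eval s) * μ s|
        ≤ ∫ s in Ioc 0 t₀, (ε/B) * ‖μ s‖ := by
      rw [← Real.norm_eq_abs]
      refine (norm_integral_le_integral_norm _).trans ?_
      refine integral_mono_of_nonneg (ae_of_all _ fun s => norm_nonneg _)
        (hμ.norm.const_mul _) ?_
      filter_upwards [ae_restrict_mem measurableSet_Ioc] with s hs
      rw [norm_mul]
      have h1 : ‖g s - p.eval s‖ ≤ ε/B := by
        rw [Real.norm_eq_abs, abs_sub_comm]
        exact (hp s ⟨hs.1.le, hs.2⟩).le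
      exact mul_le_mul_of_nonneg_right h1 (norm_nonneg _)
    rw [integral_const_mul] at hbound
    calc |∫ s in Ioc 0 t₀, (g s - p.eval s) * μ s|
        ≤ ε/B * ∫ s in Ioc 0 t₀, ‖μ s‖ := hbound
      _ ≤ ε/B * B := by
          refine mul_le_mul_of_nonneg_left ?_ (by positivity)
          rw [hB]; linarith
      _ = ε := by field_simp
  have habs : |∫ s in Ioc 0 t₀, g s * μ s| ≤ 0 := by
    refine le_of_forall_pos_le_add fun ε hε => ?_
    rw [zero_add]
    exact key ε hε
  have := abs_nonneg (∫ s in Ioc 0 t₀, g s * μ s)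
  have : |∫ s in Ioc 0 t₀, g s * μ s| = 0 := le_antisymm habs this
  exact abs_eq_zero.mp this

end Stmt15

open Stmt15 in
theorem stmt_15 (a t₀ β : ℝ) (ht₀ : 0 < t₀) (hβ : β ∈ Set.Ioo (0:ℝ) 1)
    (μ : ℝ → ℝ) (hμ : IntegrableOn μ (Set.Ioc 0 t₀))
    (hvanish : ∀ t, t₀ < t →
      a + (1 / Real.Gamma β) * ∫ s in Set.Ioc 0 t₀, (t - s) ^ (β - 1) * μ s = 0) :
    a = 0 ∧ ∀ᵐ s ∂(volume.restrict (Set.Ioc 0 t₀)), μ s = 0 := by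
  obtain ⟨hβ0, hβ1⟩ := hβ
  have hΓ : 0 < Real.Gamma β := Real.Gamma_pos_of_pos hβ0
  have hc : (1 / Real.Gamma β) ≠ 0 := by positivity
  -- a = 0
  have hGlim := limA ht₀ hμ hβ1
  have h1 : Tendsto (fun t => a + (1 / Real.Gamma β) *
      ∫ s in Ioc 0 t₀, (t - s) ^ (β - 1) * μ s) atTop (𝓝 (a + (1 / Real.Gamma β) * 0)) :=
    tendsto_const_nhds.add (hGlim.const_mul _)
  have h2 : Tendsto (fun t : ℝ => a + (1 / Real.Gamma β) *
      ∫ s in Ioc 0 t₀, (t - s) ^ (β - 1) * μ s) atTop (𝓝 0) := by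
    refine tendsto_const_nhds.congr' ?_
    filter_upwards [eventually_gt_atTop t₀] with t ht
    exact (hvanish t ht).symm
  have ha : a = 0 := by
    have := tendsto_nhds_unique h1 h2
    rw [mul_zero, add_zero] at this
    exact this
  refine ⟨ha, ?_⟩
  -- kernel integrals vanish
  have hG0 : ∀ t, t₀ < t →
      ∫ s in Ioc 0 t₀, s ^ (0:ℕ) * (t - s) ^ (β - 1) * μ s = 0 := by
    intro t ht
    have h := hvanish t ht
    rw [ha, zero_add] at h
    have h' : ∫ s in Ioc 0 t₀, (t - s) ^ (β - 1) * μ s = 0 := by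
      rcases mul_eq_zero.mp h with h'' | h''
      · exact absurd h'' hc
      · exact h''
    have heq : ∫ s in Ioc 0 t₀, s ^ (0:ℕ) * (t - s) ^ (β - 1) * μ s
        = ∫ s in Ioc 0 t₀, (t - s) ^ (β - 1) * μ s :=
      setIntegral_congr_fun measurableSet_Ioc fun s _ => by
        rw [pow_zero, one_mul]
    rw [heq]
    exact h'
  -- moments vanish
  have hmom := moments ht₀ hμ hβ1 hG0
  -- conclude
  have hloc : LocallyIntegrable μ (volume.restrict (Ioc 0 t₀)) :=
    hμ.locallyIntegrable
  refine ae_eq_zero_of_integral_contDiff_smul_eq_zero hloc fun g hg hgsupp => ?_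
  have : ∫ x, g x • μ x ∂(volume.restrict (Ioc 0 t₀))
      = ∫ s in Ioc 0 t₀, g s * μ s := by
    simp [smul_eq_mul]
  rw [this]
  exact contzero ht₀ hμ hmom g hg.continuous
end
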